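/- Let A be a 3×3 positive definite matrix with leading principal submatrices A_2 and A_3 = A, let L = Span{(0,0,1)ᵀ}, and M = √(A^{-1})(L). Then √(A^{-1}) P_{M^⊥} √(A^{-1}) equals the block matrix with A_2^{-1} in the upper-left 2×2 block and zeros elsewhere, where P_{M^⊥} is the orthogonal projection onto M^⊥. -/

import Mathlib

open scoped ComplexOrder InnerProductSpace

/-- The positive semidefinite square root of a positive semidefinite matrix
(the definition of `Matrix.PosSemidef.sqrt` in the older Mathlib, since removed). -/
noncomputable def Matrix.PosSemidef.sqrt {n 𝕜 : Type*} [Fintype n] [DecidableEq n] [RCLike 𝕜]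
    {A : Matrix n n 𝕜} (hA : A.PosSemidef) : Matrix n n 𝕜 :=
  hA.1.eigenvectorUnitary.1 * Matrix.diagonal ((↑) ∘ (√·) ∘ hA.1.eigenvalues) *
    (star hA.1.eigenvectorUnitary : Matrix n n 𝕜)

section aux

variable {𝕜 : Type*} [RCLike 𝕜]

private lemma stmt11_posdef_sub (A : Matrix (Fin 3) (Fin 3) 𝕜) (hA : A.PosDef) :
    (A.submatrix (Fin.castLE (by norm_num : (2:ℕ) ≤ 3))
      (Fin.castLE (by norm_num : (2:ℕ) ≤ 3))).PosDef := by
  exact hA.submatrix (Fin.castLE_injective _)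

private lemma stmt11_sqrt_herm {n : Type*} [Fintype n] [DecidableEq n]
    {B : Matrix n n 𝕜} (hB : B.PosSemidef) : hB.sqrt.IsHermitian := by
  unfold Matrix.PosSemidef.sqrt
  apply Matrix.isHermitian_mul_mul_conjTranspose
  refine Matrix.isHermitian_diagonal_of_self_adjoint _ ?_
  funext i
  simp [IsSelfAdjoint, Function.comp]

private lemma stmt11_sqrt_mul_self {n : Type*} [Fintype n] [DecidableEq n]
    {B : Matrix n n 𝕜} (hB : B.PosSemidef) : hB.sqrt * hB.sqrt = B := by
  unfold Matrix.PosSemidef.sqrt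
  conv_rhs => rw [hB.1.spectral_theorem]
  have hU : (star hB.1.eigenvectorUnitary : Matrix n n 𝕜) * hB.1.eigenvectorUnitary.1 = 1 :=
    Unitary.coe_star_mul_self _
  rw [Unitary.conjStarAlgAut_apply]
  simp only [Matrix.mul_assoc]
  congr 1
  rw [← Matrix.mul_assoc (star _ : Matrix n n 𝕜), hU, Matrix.one_mul, ← Matrix.mul_assoc,
    Matrix.diagonal_mul_diagonal]
  congr 2
  funext i
  simp only [Function.comp]
  rw [← RCLike.ofReal_mul, Real.mul_self_sqrt (hB.eigenvalues_nonneg i)]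

set_option maxHeartbeats 3200000 in
private lemma stmt11_entry (A : Matrix (Fin 3) (Fin 3) 𝕜) (hA : A.PosDef)
    (hB22 : A⁻¹ 2 2 ≠ 0) (i j : Fin 3) :
    (Matrix.of fun i j : Fin 3 =>
        if h : i.1 < 2 ∧ j.1 < 2 then
          (A.submatrix (Fin.castLE (by norm_num : (2:ℕ) ≤ 3))
            (Fin.castLE (by norm_num : (2:ℕ) ≤ 3)))⁻¹ ⟨i.1, h.1⟩ ⟨j.1, h.2⟩ else 0) i j
      = A⁻¹ i j - A⁻¹ i 2 * A⁻¹ 2 j / A⁻¹ 2 2 := by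
  have hd : A.det ≠ 0 := hA.det_pos.ne'
  have he : (A.submatrix (Fin.castLE (by norm_num : (2:ℕ) ≤ 3))
      (Fin.castLE (by norm_num : (2:ℕ) ≤ 3))).det ≠ 0 :=
    (stmt11_posdef_sub A hA).det_pos.ne'
  have h1 : ∀ h : (2:ℕ) ≤ 3, (Fin.castLE h (1 : Fin 2)) = (1 : Fin 3) := fun _ => rfl
  have h0 : ∀ h : (2:ℕ) ≤ 3, (Fin.castLE h (0 : Fin 2)) = (0 : Fin 3) := fun _ => rfl
  rw [Matrix.det_fin_two] at he
  simp only [Matrix.submatrix_apply, h0, h1] at he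
  fin_cases i <;> fin_cases j <;>
    simp only [Matrix.of_apply, Fin.isValue, Fin.val_zero, Fin.val_one, Fin.val_two] <;>
    norm_num <;>
  · simp only [Matrix.inv_def, Ring.inverse_eq_inv', Matrix.smul_apply, Matrix.adjugate_fin_three,
      Matrix.adjugate_fin_two, Matrix.det_fin_two, Matrix.submatrix_apply,
      Matrix.cons_val', Matrix.cons_val_zero, Matrix.cons_val_one, Matrix.head_cons,
      Matrix.empty_val', Matrix.cons_val_fin_one, Matrix.head_fin_const, smul_eq_mul,
      Matrix.of_apply, h1, h0, Matrix.cons_val, Fin.reduceFinMk] at hd he ⊢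
    field_simp
    simp only [Matrix.det_fin_three] at hd ⊢
    field_simp
    ring

end aux

/-- Let `A` be a `3 × 3` positive definite matrix, `A₂` its leading principal `2 × 2`
submatrix, `L = span{(0,0,1)}`, `M = √(A⁻¹)(L)`.  Then
`√(A⁻¹) P_{M^⊥} √(A⁻¹)` is the block matrix `[[A₂⁻¹, 0], [0, 0]]`. -/
theorem stmt_11 {𝕜 : Type*} [RCLike 𝕜]
    (A : Matrix (Fin 3) (Fin 3) 𝕜) (hA : A.PosDef) :
    let A₂ : Matrix (Fin 2) (Fin 2) 𝕜 :=
      A.submatrix (Fin.castLE (by norm_num)) (Fin.castLE (by norm_num))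
    let Slin := Matrix.toEuclideanLin hA.inv.posSemidef.sqrt
    let L : Submodule 𝕜 (EuclideanSpace 𝕜 (Fin 3)) :=
      Submodule.span 𝕜 {EuclideanSpace.single (2 : Fin 3) (1 : 𝕜)}
    let M : Submodule 𝕜 (EuclideanSpace 𝕜 (Fin 3)) := L.map Slin
    let P : EuclideanSpace 𝕜 (Fin 3) →ₗ[𝕜] EuclideanSpace 𝕜 (Fin 3) :=
      Mᗮ.subtype ∘ₗ (Mᗮ.orthogonalProjectionOnto).toLinearMap
    Slin ∘ₗ P ∘ₗ Slin =
      Matrix.toEuclideanLin (Matrix.of fun i j : Fin 3 =>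
        if h : i.1 < 2 ∧ j.1 < 2 then A₂⁻¹ ⟨i.1, h.1⟩ ⟨j.1, h.2⟩ else 0) := by
  intro A₂ Slin L M P
  set v : EuclideanSpace 𝕜 (Fin 3) := Slin (EuclideanSpace.single (2 : Fin 3) (1 : 𝕜)) with hv
  have hB : (A⁻¹).PosDef := hA.inv
  have hBh := hB.isHermitian
  have hB22 : A⁻¹ 2 2 ≠ 0 := by
    have hx : (Pi.single (2:Fin 3) (1:𝕜) : Fin 3 → 𝕜) ≠ 0 := by
      intro h; simpa using congrFun h 2
    have hpos := hB.re_dotProduct_pos hx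
    have heq : dotProduct (star (Pi.single (2:Fin 3) (1:𝕜) : Fin 3 → 𝕜))
        (Matrix.mulVec A⁻¹ (Pi.single (2:Fin 3) (1:𝕜) : Fin 3 → 𝕜)) = A⁻¹ 2 2 := by
      simp [dotProduct, Matrix.mulVec, Pi.single_apply, Fin.sum_univ_three]
    intro h
    rw [heq, h] at hpos
    simp at hpos
  have hSh : (hA.inv.posSemidef.sqrt).IsHermitian := stmt11_sqrt_herm _
  have hsymm : ∀ x y : EuclideanSpace 𝕜 (Fin 3), ⟪Slin x, y⟫_𝕜 = ⟪x, Slin y⟫_𝕜 :=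
    Matrix.isHermitian_iff_isSymmetric.1 hSh
  have hSS : ∀ x : EuclideanSpace 𝕜 (Fin 3), Slin (Slin x) = Matrix.toEuclideanLin A⁻¹ x := by
    intro x
    show Matrix.toEuclideanLin _ (Matrix.toEuclideanLin _ x) = _
    simp only [Matrix.toEuclideanLin_apply, Equiv.apply_symm_apply, Matrix.mulVec_mulVec,
      stmt11_sqrt_mul_self]
  have hcoord : ∀ (N : Matrix (Fin 3) (Fin 3) 𝕜) (x : EuclideanSpace 𝕜 (Fin 3)) (i : Fin 3),
      Matrix.toEuclideanLin N x i = ∑ k, N i k * x k := by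
    intro N x i
    simp [Matrix.toEuclideanLin_apply, Matrix.mulVec, dotProduct]
  have hM : M = Submodule.span 𝕜 {v} := by
    show L.map Slin = _
    rw [show L = Submodule.span 𝕜 {EuclideanSpace.single (2 : Fin 3) (1 : 𝕜)} from rfl,
      Submodule.map_span, Set.image_singleton]
  apply LinearMap.ext
  intro w
  have hPw : ∀ x : EuclideanSpace 𝕜 (Fin 3),
      P x = x - (⟪v, x⟫_𝕜 / ((‖v‖ ^ 2 : ℝ) : 𝕜)) • v := by
    intro x
    have hMo : Mᗮ = (Submodule.span 𝕜 {v})ᗮ := by rw [hM]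
    show Mᗮ.starProjection x = _
    rw [Submodule.starProjection_orthogonal_val]
    simp only [hM]
    rw [Submodule.starProjection_singleton]
  simp only [LinearMap.comp_apply, hPw]
  rw [map_sub, map_smul]
  have hnorm : ((‖v‖ ^ 2 : ℝ) : 𝕜) = ⟪v, v⟫_𝕜 := by
    rw [inner_self_eq_norm_sq_to_K]; push_cast; ring
  rw [hnorm]
  have hSv : Slin v = Matrix.toEuclideanLin A⁻¹ (EuclideanSpace.single (2 : Fin 3) (1 : 𝕜)) :=
    hSS _
  have hSvc : ∀ i, Slin v i = A⁻¹ i 2 := by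
    intro i
    rw [hSv, hcoord]
    simp [EuclideanSpace.single_apply, Fin.sum_univ_three]
  have hin1 : ⟪v, Slin w⟫_𝕜 = ∑ k, A⁻¹ 2 k * w k := by
    rw [← hsymm]
    rw [show (⟪Slin v, w⟫_𝕜) = ∑ k, (starRingEnd 𝕜) (Slin v k) * w k from by simp only [PiLp.inner_apply, RCLike.inner_apply']]
    refine Finset.sum_congr rfl fun k _ => ?_
    rw [hSvc k, starRingEnd_apply, hBh.apply 2 k]
  have hin2 : ⟪v, v⟫_𝕜 = A⁻¹ 2 2 := by
    nth_rewrite 2 [hv]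
    rw [← hsymm]
    rw [show (⟪Slin v, EuclideanSpace.single (2 : Fin 3) (1:𝕜)⟫_𝕜)
        = ∑ k, (starRingEnd 𝕜) (Slin v k) * (EuclideanSpace.single (2 : Fin 3) (1:𝕜)) k
        from by simp only [PiLp.inner_apply, RCLike.inner_apply']]
    have : ∀ k : Fin 3, (EuclideanSpace.single (2 : Fin 3) (1:𝕜)) k
        = if k = 2 then 1 else 0 := fun k => EuclideanSpace.single_apply 2 1 k
    rw [Fin.sum_univ_three, this 0, this 1, this 2]
    rw [if_neg (by decide : ¬(0:Fin 3) = 2), if_neg (by decide : ¬(1:Fin 3) = 2), if_pos rfl,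
      mul_zero, mul_zero, mul_one, zero_add, zero_add, hSvc 2, starRingEnd_apply, hBh.apply 2 2]
  rw [hSS w, hin1, hin2]
  ext i
  rw [PiLp.sub_apply, PiLp.smul_apply, smul_eq_mul, hSvc i, hcoord, hcoord]
  have hT := fun j => stmt11_entry A hA hB22 i j
  rw [show ∑ x : Fin 3, (Matrix.of fun i j : Fin 3 =>
        if h : i.1 < 2 ∧ j.1 < 2 then A₂⁻¹ ⟨i.1, h.1⟩ ⟨j.1, h.2⟩ else 0) i x * w x
      = ∑ x : Fin 3, (A⁻¹ i x - A⁻¹ i 2 * A⁻¹ 2 x / A⁻¹ 2 2) * w x from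
    Finset.sum_congr rfl fun k _ => by rw [hT k]]
  rw [Fin.sum_univ_three, Fin.sum_univ_three, Fin.sum_univ_three]
  field_simp
  ring
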